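/- Let n ≥ 5 and let f be a Schwartz function on ℝⁿ. Then the function u defined by u(x) = f(x)/‖x‖² for x ≠ 0 and u(0) = 0 belongs to L²(ℝⁿ), and ‖x‖²·u(x) = f(x) for all x ≠ 0. Consequently, the Schwartz space 𝒮(ℝⁿ) is contained in the range of the multiplication operator M₀ acting on {u ∈ L²(ℝⁿ) : ‖x‖²u ∈ L²(ℝⁿ)} by (M₀u)(x) = ‖x‖²u(x). -/

import Mathlib

open MeasureTheory Filter Set Metric
open scoped ENNReal Topology Classical

noncomputable section

/-- `μ` is uniformly `α`-Hölder continuous: there is `C > 0` with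
`μ(I) < C |I|^α` for every (nondegenerate) interval `I` with `|I| < 1`. -/
def UnifHolder (μ : Measure ℝ) (α : ℝ) : Prop :=
  ∃ C > (0 : ℝ), ∀ a b : ℝ, a < b → b - a < 1 →
    μ (Set.Icc a b) < ENNReal.ofReal (C * (b - a) ^ α)

/-- The Fourier transform `μ̂(s) = ∫ e^{-isx} dμ(x)` of a finite Borel measure on `ℝ`. -/
def measureFT (μ : Measure ℝ) (s : ℝ) : ℂ :=
  ∫ x : ℝ, Complex.exp (-(s * x) * Complex.I) ∂μ

/-- The time-average quantum return probability
`W_μ(t) = (1/t) ∫_0^t |μ̂(s)|² ds`. -/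
def Wavg (μ : Measure ℝ) (t : ℝ) : ℝ :=
  (1 / t) * ∫ s in Set.Ioc (0 : ℝ) t, ‖measureFT μ s‖ ^ 2

/-- `μ` is the spectral measure of the pair `(T, ψ)`: it is finite, vanishes outside
the spectrum of `T`, and `∫ f dμ = ⟨ψ, f(T)ψ⟩` for every continuous `f : ℝ → ℝ`,
where `f(T)` is given by the continuous functional calculus. -/
def IsSpectralMeasure {H : Type*} [NormedAddCommGroup H] [InnerProductSpace ℂ H]
    [CompleteSpace H] (T : H →L[ℂ] H) (ψ : H) (μ : Measure ℝ) : Prop :=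
  IsFiniteMeasure μ ∧ μ {x : ℝ | (x : ℂ) ∉ spectrum ℂ T} = 0 ∧
    ∀ f : C(ℝ, ℝ), ∫ x, f x ∂μ = (inner ℂ ψ ((cfc (f : ℝ → ℝ) T) ψ) : ℂ).re

/-- The real part of the spectrum of a bounded operator. -/
def realSpectrum {H : Type*} [NormedAddCommGroup H] [InnerProductSpace ℂ H]
    [CompleteSpace H] (T : H →L[ℂ] H) : Set ℝ :=
  {x : ℝ | (x : ℂ) ∈ spectrum ℂ T}

/-- `μ` is `α`-Hausdorff continuous: `μ(Λ) = 0` for every Borel set `Λ` with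
`h^α(Λ) = 0`. -/
def HausdorffCont (μ : Measure ℝ) (α : ℝ) : Prop :=
  ∀ Λ : Set ℝ, MeasurableSet Λ → μH[α] Λ = 0 → μ Λ = 0

/-- The lower pointwise scaling exponent `d⁻_μ(x)`, with value `∞` when
`μ(B(x;ε)) = 0` for some `ε > 0`. -/
def dLow (μ : Measure ℝ) (x : ℝ) : EReal :=
  if ∃ ε > (0 : ℝ), μ (Metric.ball x ε) = 0 then ⊤
  else Filter.liminf
    (fun ε : ℝ => ((Real.log (μ (Metric.ball x ε)).toReal / Real.log ε : ℝ) : EReal))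
    (𝓝[>] (0 : ℝ))

/-- The upper pointwise scaling exponent `d⁺_μ(x)`, with value `∞` when
`μ(B(x;ε)) = 0` for some `ε > 0`. -/
def dUp (μ : Measure ℝ) (x : ℝ) : EReal :=
  if ∃ ε > (0 : ℝ), μ (Metric.ball x ε) = 0 then ⊤
  else Filter.limsup
    (fun ε : ℝ => ((Real.log (μ (Metric.ball x ε)).toReal / Real.log ε : ℝ) : EReal))
    (𝓝[>] (0 : ℝ))

/-- The lower correlation dimension `D⁻_μ(2)`. -/
def DLow2 (μ : Measure ℝ) : EReal :=
  Filter.liminf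
    (fun ε : ℝ =>
      ((Real.log (∫ x, (μ (Metric.ball x ε)).toReal ∂μ) / Real.log ε : ℝ) : EReal))
    (𝓝[>] (0 : ℝ))

/-- The upper correlation dimension `D⁺_μ(2)`. -/
def DUp2 (μ : Measure ℝ) : EReal :=
  Filter.limsup
    (fun ε : ℝ =>
      ((Real.log (∫ x, (μ (Metric.ball x ε)).toReal ∂μ) / Real.log ε : ℝ) : EReal))
    (𝓝[>] (0 : ℝ))

/-- A set is generic (residual / comeagre in the Baire sense used in the paper)
if it contains a dense `G_δ` set. -/
def Generic {X : Type*} [TopologicalSpace X] (A : Set X) : Prop :=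
  ∃ S : Set X, S ⊆ A ∧ IsGδ S ∧ Dense S


lemma key_lintegral (n : ℕ) (hn : 5 ≤ n) :
    ∫⁻ x in ball (0 : EuclideanSpace ℝ (Fin n)) 1,
      ((ENNReal.ofReal ‖x‖) ^ 4)⁻¹ ∂volume < ⊤ := by
  haveI : Nonempty (Fin n) := ⟨⟨0, by omega⟩⟩
  set E := EuclideanSpace ℝ (Fin n) with hE
  haveI : Nontrivial E := by
    refine ⟨EuclideanSpace.single ⟨0, by omega⟩ 1, 0, fun h => ?_⟩
    have := congrArg (fun v : EuclideanSpace ℝ (Fin n) => v ⟨0, by omega⟩) h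
    rw [EuclideanSpace.single_apply] at this
    simp only [if_pos rfl] at this
    exact one_ne_zero this
  set F : E → ℝ≥0∞ := fun x => ((ENNReal.ofReal ‖x‖) ^ 4)⁻¹ with hF
  set A : ℕ → Set E := fun k => ball 0 ((2:ℝ)⁻¹ ^ k) \ ball 0 ((2:ℝ)⁻¹ ^ (k+1)) with hA
  set V : ℝ≥0∞ := volume (ball (0 : E) 1) with hV
  have hVne : V ≠ ⊤ := measure_ball_lt_top.ne
  -- covering
  have hsub : ball (0:E) 1 ⊆ {0} ∪ ⋃ k, A k := by
    intro x hx
    rcases eq_or_ne x 0 with h | h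
    · exact Or.inl h
    · right
      have hx1 : ‖x‖ < 1 := mem_ball_zero_iff.1 hx
      have hx0 : 0 < ‖x‖ := norm_pos_iff.2 h
      have hex : ∃ m : ℕ, (2:ℝ)⁻¹ ^ m ≤ ‖x‖ := by
        obtain ⟨m, hm⟩ := exists_pow_lt_of_lt_one hx0 (by norm_num : (2:ℝ)⁻¹ < 1)
        exact ⟨m, hm.le⟩
      have hm0 : Nat.find hex ≠ 0 := by
        intro h0
        have hspec := Nat.find_spec hex
        rw [h0] at hspec
        simp at hspec
        linarith
      obtain ⟨k, hk⟩ := Nat.exists_eq_succ_of_ne_zero hm0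
      have hspec : (2:ℝ)⁻¹ ^ (k+1) ≤ ‖x‖ := by
        have := Nat.find_spec hex
        rwa [hk] at this
      have hmin : ¬ ((2:ℝ)⁻¹ ^ k ≤ ‖x‖) := Nat.find_min hex (by omega)
      refine mem_iUnion.2 ⟨k, ?_, ?_⟩
      · exact mem_ball_zero_iff.2 (lt_of_not_ge hmin)
      · intro hmem
        exact absurd (mem_ball_zero_iff.1 hmem) (not_lt.2 hspec)
  have hAmeas : ∀ k, MeasurableSet (A k) := fun k =>
    measurableSet_ball.diff measurableSet_ball
  -- per-annulus bound
  have hbound : ∀ k, ∫⁻ x in A k, F x ∂volume ≤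
      (2:ℝ≥0∞) ^ (4*k+4) * (ENNReal.ofReal (((2:ℝ)⁻¹ ^ k) ^ n) * V) := by
    intro k
    have hFb : ∀ x ∈ A k, F x ≤ (2:ℝ≥0∞) ^ (4*k+4) := by
      intro x hx
      have hxk : (2:ℝ)⁻¹ ^ (k+1) ≤ ‖x‖ := by
        have := hx.2
        rw [mem_ball_zero_iff] at this
        push_neg at this
        exact this
      have h1 : ENNReal.ofReal ((2:ℝ)⁻¹ ^ (k+1)) ≤ ENNReal.ofReal ‖x‖ :=
        ENNReal.ofReal_le_ofReal hxk
      have h2 : ((ENNReal.ofReal ‖x‖) ^ 4)⁻¹ ≤ ((ENNReal.ofReal ((2:ℝ)⁻¹ ^ (k+1))) ^ 4)⁻¹ :=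
        ENNReal.inv_le_inv.2 (pow_le_pow_left' h1 4)
      refine h2.trans_eq ?_
      have h3 : ENNReal.ofReal ((2:ℝ)⁻¹ ^ (k+1)) = (2:ℝ≥0∞)⁻¹ ^ (k+1) := by
        rw [ENNReal.ofReal_pow (by norm_num), ENNReal.ofReal_inv_of_pos (by norm_num),
          ENNReal.ofReal_ofNat]
      rw [h3, ← pow_mul, ← ENNReal.inv_pow, inv_inv]
      congr 1
      ring
    calc ∫⁻ x in A k, F x ∂volume
        ≤ ∫⁻ _ in A k, (2:ℝ≥0∞) ^ (4*k+4) ∂volume := setLIntegral_mono' (hAmeas k) hFb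
      _ = (2:ℝ≥0∞) ^ (4*k+4) * volume (A k) := by rw [setLIntegral_const]
      _ ≤ (2:ℝ≥0∞) ^ (4*k+4) * volume (ball (0:E) ((2:ℝ)⁻¹ ^ k)) := by
          gcongr
          exact diff_subset
      _ = (2:ℝ≥0∞) ^ (4*k+4) * (ENNReal.ofReal (((2:ℝ)⁻¹ ^ k) ^ n) * V) := by
          rw [Measure.addHaar_ball volume (0:E) (by positivity), finrank_euclideanSpace,
            Fintype.card_fin]
  -- each term is at most 16 * 2⁻¹^k * V
  have hterm : ∀ k, (2:ℝ≥0∞) ^ (4*k+4) * (ENNReal.ofReal (((2:ℝ)⁻¹ ^ k) ^ n) * V)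
      ≤ 16 * (2:ℝ≥0∞)⁻¹ ^ k * V := by
    intro k
    have h4 : ENNReal.ofReal (((2:ℝ)⁻¹ ^ k) ^ n) = (2:ℝ≥0∞)⁻¹ ^ (k * n) := by
      rw [← pow_mul, ENNReal.ofReal_pow (by norm_num), ENNReal.ofReal_inv_of_pos (by norm_num),
        ENNReal.ofReal_ofNat]
    rw [h4]
    have h5 : (2:ℝ≥0∞)⁻¹ ^ (k * n) ≤ (2:ℝ≥0∞)⁻¹ ^ (k * 5) :=
      pow_le_pow_of_le_one (by positivity) (by simp [ENNReal.inv_le_one]) (by nlinarith)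
    calc (2:ℝ≥0∞) ^ (4*k+4) * ((2:ℝ≥0∞)⁻¹ ^ (k*n) * V)
        ≤ (2:ℝ≥0∞) ^ (4*k+4) * ((2:ℝ≥0∞)⁻¹ ^ (k*5) * V) := by gcongr
      _ = 16 * (2:ℝ≥0∞)⁻¹ ^ k * V := by
          have h21 : (2:ℝ≥0∞) * 2⁻¹ = 1 := ENNReal.mul_inv_cancel (by norm_num) (by norm_num)
          have hpow : ((2:ℝ≥0∞)^4)^k * (((2:ℝ≥0∞)⁻¹)^4)^k = 1 := by
            rw [← mul_pow, ← mul_pow, h21, one_pow, one_pow]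
          have : (2:ℝ≥0∞) ^ (4*k+4) * (2:ℝ≥0∞)⁻¹ ^ (k*5)
              = 16 * (2:ℝ≥0∞)⁻¹ ^ k := by
            have hk5 : k * 5 = 4 * k + k := by ring
            rw [hk5, pow_add, pow_add, pow_mul, pow_mul]
            calc ((2:ℝ≥0∞) ^ 4) ^ k * (2:ℝ≥0∞) ^ 4 * (((2:ℝ≥0∞)⁻¹ ^ 4) ^ k * (2:ℝ≥0∞)⁻¹ ^ k)
                = (((2:ℝ≥0∞) ^ 4) ^ k * (((2:ℝ≥0∞)⁻¹) ^ 4) ^ k) * ((2:ℝ≥0∞) ^ 4 * (2:ℝ≥0∞)⁻¹ ^ k) := by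
                  ring
              _ = 16 * (2:ℝ≥0∞)⁻¹ ^ k := by
                  rw [hpow, one_mul]
                  norm_num
          rw [← mul_assoc, this]
  -- put everything together
  have hmain : ∫⁻ x in ball (0:E) 1, F x ∂volume ≤ 16 * (1 - (2:ℝ≥0∞)⁻¹)⁻¹ * V := by
    calc ∫⁻ x in ball (0:E) 1, F x ∂volume
        ≤ ∫⁻ x in ({0} ∪ ⋃ k, A k), F x ∂volume := lintegral_mono_set hsub
      _ ≤ ∫⁻ x in ({0} : Set E), F x ∂volume + ∫⁻ x in ⋃ k, A k, F x ∂volume :=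
          lintegral_union_le _ _ _
      _ = ∫⁻ x in ⋃ k, A k, F x ∂volume := by
          rw [setLIntegral_measure_zero _ _ (measure_singleton 0), zero_add]
      _ ≤ ∑' k, ∫⁻ x in A k, F x ∂volume := lintegral_iUnion_le _ _
      _ ≤ ∑' k, 16 * (2:ℝ≥0∞)⁻¹ ^ k * V :=
          ENNReal.tsum_le_tsum fun k => (hbound k).trans (hterm k)
      _ = 16 * (1 - (2:ℝ≥0∞)⁻¹)⁻¹ * V := by
          rw [ENNReal.tsum_mul_right, ENNReal.tsum_mul_left, ENNReal.tsum_geometric]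
  refine hmain.trans_lt ?_
  have h0 : (0:ℝ≥0∞) < 1 - 2⁻¹ := tsub_pos_of_lt (ENNReal.inv_lt_one.2 (by norm_num))
  have hinv : (1 - (2:ℝ≥0∞)⁻¹)⁻¹ ≠ ⊤ := ENNReal.inv_ne_top.2 h0.ne'
  exact ENNReal.mul_lt_top (ENNReal.mul_lt_top (by norm_num) hinv.lt_top) hVne.lt_top

lemma memL2_aux (n : ℕ) (hn : 5 ≤ n) (f : SchwartzMap (EuclideanSpace ℝ (Fin n)) ℂ) :
    MemLp (fun x : EuclideanSpace ℝ (Fin n) =>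
        if x = 0 then 0 else f x / ((‖x‖ ^ 2 : ℝ) : ℂ)) 2 volume := by
  set E := EuclideanSpace ℝ (Fin n) with hE
  have heq : (fun x : E => if x = 0 then 0 else f x / ((‖x‖ ^ 2 : ℝ) : ℂ))
      = fun x : E => f x / ((‖x‖ ^ 2 : ℝ) : ℂ) := by
    funext x
    split_ifs with h
    · subst h; simp
    · rfl
  rw [heq]
  -- measurability
  have hmeas : AEStronglyMeasurable (fun x : E => f x / ((‖x‖ ^ 2 : ℝ) : ℂ)) volume := by
    refine (Measurable.div ?_ ?_).aestronglyMeasurable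
    · exact f.continuous.measurable
    · exact Complex.measurable_ofReal.comp ((measurable_norm).pow_const 2)
  -- uniform bound on f
  set C : ℝ := (SchwartzMap.seminorm ℝ 0 0) f with hC
  have hCb : ∀ x : E, ‖f x‖ ≤ C := fun x => SchwartzMap.norm_le_seminorm ℝ f x
  have hC0 : 0 ≤ C := le_trans (norm_nonneg _) (hCb 0)
  -- majorant
  set g : E → ℝ := fun x =>
    (ball (0:E) 1).indicator (fun x => C * ((‖x‖ ^ 2 : ℝ))⁻¹) x + ‖f x‖ with hg
  have hfmem : MemLp (fun x : E => ‖f x‖) 2 volume := by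
    have hint : Integrable (fun x : E => ‖f x‖ ^ 2) volume := by
      refine (f.integrable.norm.const_mul C).mono'
        ((f.continuous.measurable.norm.pow_const 2).aestronglyMeasurable) ?_
      filter_upwards with x
      have h1 : ‖f x‖ ^ 2 ≤ C * ‖f x‖ := by
        have := mul_le_mul_of_nonneg_right (hCb x) (norm_nonneg (f x))
        nlinarith [norm_nonneg (f x)]
      simpa [abs_of_nonneg (sq_nonneg ‖f x‖), Real.norm_eq_abs] using h1
    exact ((memLp_two_iff_integrable_sq_norm f.continuous.aestronglyMeasurable).2 (by
      simpa using hint)).norm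
  have hindmem : MemLp ((ball (0:E) 1).indicator (fun x => C * ((‖x‖ ^ 2 : ℝ))⁻¹)) 2 volume := by
    rw [memLp_indicator_iff_restrict measurableSet_ball]
    refine MemLp.const_mul ?_ C
    have hinvmeas : AEStronglyMeasurable (fun x : E => ((‖x‖ ^ 2 : ℝ))⁻¹)
        (volume.restrict (ball (0:E) 1)) :=
      (((measurable_norm).pow_const 2).inv).aestronglyMeasurable
    rw [memLp_two_iff_integrable_sq hinvmeas]
    refine ⟨(((measurable_norm).pow_const 2).inv.pow_const 2).aestronglyMeasurable, ?_⟩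
    rw [hasFiniteIntegral_iff_norm]
    refine lt_of_le_of_lt ?_ (key_lintegral n hn)
    refine lintegral_mono fun x => ?_
    rcases eq_or_ne x 0 with rfl | hx
    · simp
    · have hx0 : 0 < ‖x‖ := norm_pos_iff.2 hx
      have : ((‖x‖ ^ 2 : ℝ))⁻¹ ^ 2 = ((‖x‖ ^ 4 : ℝ))⁻¹ := by
        rw [← inv_pow, ← pow_mul, inv_pow]
      rw [Real.norm_eq_abs, abs_of_nonneg (by positivity), this,
        ENNReal.ofReal_inv_of_pos (by positivity), ENNReal.ofReal_pow (norm_nonneg x)]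
  have hgmem : MemLp g 2 volume := hindmem.add hfmem
  -- pointwise bound
  refine MemLp.of_le hgmem hmeas ?_
  filter_upwards with x
  have hnorm : ‖f x / ((‖x‖ ^ 2 : ℝ) : ℂ)‖ = ‖f x‖ * ((‖x‖ ^ 2 : ℝ))⁻¹ := by
    rw [norm_div, Complex.norm_real, Real.norm_eq_abs, abs_of_nonneg (by positivity),
      div_eq_mul_inv]
  have hg0 : 0 ≤ g x := by
    apply add_nonneg _ (norm_nonneg _)
    apply Set.indicator_nonneg
    intro y _
    positivity
  rw [hnorm, Real.norm_eq_abs, abs_of_nonneg hg0]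
  by_cases hx : x ∈ ball (0:E) 1
  · rw [hg]
    simp only [Set.indicator_of_mem hx]
    have h1 : ‖f x‖ * ((‖x‖ ^ 2 : ℝ))⁻¹ ≤ C * ((‖x‖ ^ 2 : ℝ))⁻¹ :=
      mul_le_mul_of_nonneg_right (hCb x) (by positivity)
    exact h1.trans (le_add_of_nonneg_right (norm_nonneg _))
  · rw [hg]
    simp only [Set.indicator_of_notMem hx]
    have hx1 : 1 ≤ ‖x‖ := by
      rw [mem_ball_zero_iff] at hx
      linarith [not_lt.1 hx]
    have h2 : ((‖x‖ ^ 2 : ℝ))⁻¹ ≤ 1 := by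
      rw [inv_le_one_iff₀]
      right
      nlinarith
    calc ‖f x‖ * ((‖x‖ ^ 2 : ℝ))⁻¹ ≤ ‖f x‖ * 1 :=
          mul_le_mul_of_nonneg_left h2 (norm_nonneg _)
      _ = ‖f x‖ := mul_one _
      _ ≤ 0 + ‖f x‖ := by linarith

lemma schwartz_memL2 (n : ℕ) (g : SchwartzMap (EuclideanSpace ℝ (Fin n)) ℂ) :
    MemLp (⇑g) 2 volume := by
  set C : ℝ := (SchwartzMap.seminorm ℝ 0 0) g with hC
  have hCb : ∀ x, ‖g x‖ ≤ C := fun x => SchwartzMap.norm_le_seminorm ℝ g x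
  have hint : Integrable (fun x => ‖g x‖ ^ 2) volume := by
    refine (g.integrable.norm.const_mul C).mono'
      ((g.continuous.measurable.norm.pow_const 2).aestronglyMeasurable) ?_
    filter_upwards with x
    have h1 : ‖g x‖ ^ 2 ≤ C * ‖g x‖ := by
      nlinarith [norm_nonneg (g x), hCb x]
    simpa [abs_of_nonneg (sq_nonneg ‖g x‖), Real.norm_eq_abs] using h1
  exact (memLp_two_iff_integrable_sq_norm g.continuous.aestronglyMeasurable).2 hint

lemma mul_cancel_aux (n : ℕ) (g : SchwartzMap (EuclideanSpace ℝ (Fin n)) ℂ)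
    (x : EuclideanSpace ℝ (Fin n)) (hx : x ≠ 0) :
    ((‖x‖ ^ 2 : ℝ) : ℂ) * (if x = 0 then 0 else g x / ((‖x‖ ^ 2 : ℝ) : ℂ)) = g x := by
  rw [if_neg hx, mul_comm, div_mul_cancel₀]
  exact_mod_cast pow_ne_zero 2 (norm_ne_zero_iff.2 hx)

/-- For `n ≥ 5` and a Schwartz function `f` on `ℝⁿ`, the function
`u(x) = f(x)/‖x‖²` (with `u(0) = 0`) is in `L²`, satisfies `‖x‖² u(x) = f(x)` for `x ≠ 0`;
consequently every Schwartz function is in the range of the multiplication operator `M₀`. -/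
theorem stmt_15 (n : ℕ) (hn : 5 ≤ n) (f : SchwartzMap (EuclideanSpace ℝ (Fin n)) ℂ) :
    MemLp (fun x : EuclideanSpace ℝ (Fin n) =>
        if x = 0 then 0 else f x / ((‖x‖ ^ 2 : ℝ) : ℂ)) 2 volume ∧
      (∀ x : EuclideanSpace ℝ (Fin n), x ≠ 0 →
        ((‖x‖ ^ 2 : ℝ) : ℂ) *
          (if x = 0 then 0 else f x / ((‖x‖ ^ 2 : ℝ) : ℂ)) = f x) ∧
      (∀ g : SchwartzMap (EuclideanSpace ℝ (Fin n)) ℂ,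
        ∃ u : EuclideanSpace ℝ (Fin n) → ℂ, MemLp u 2 volume ∧
          MemLp (fun x => ((‖x‖ ^ 2 : ℝ) : ℂ) * u x) 2 volume ∧
          (fun x => ((‖x‖ ^ 2 : ℝ) : ℂ) * u x) =ᵐ[volume] (g : _ → ℂ)) := by
  haveI : Nonempty (Fin n) := ⟨⟨0, by omega⟩⟩
  haveI : Nontrivial (EuclideanSpace ℝ (Fin n)) := by
    refine ⟨EuclideanSpace.single ⟨0, by omega⟩ 1, 0, fun h => ?_⟩
    have := congrArg (fun v : EuclideanSpace ℝ (Fin n) => v ⟨0, by omega⟩) h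
    rw [EuclideanSpace.single_apply] at this
    simp only [if_pos rfl] at this
    exact one_ne_zero this
  refine ⟨memL2_aux n hn f, fun x hx => mul_cancel_aux n f x hx, fun g => ?_⟩
  have hae : (fun x => ((‖x‖ ^ 2 : ℝ) : ℂ) *
      (if x = 0 then 0 else g x / ((‖x‖ ^ 2 : ℝ) : ℂ))) =ᵐ[volume] (g : _ → ℂ) := by
    have h0 : volume ({(0 : EuclideanSpace ℝ (Fin n))} : Set (EuclideanSpace ℝ (Fin n))) = 0 :=
      measure_singleton _
    refine Filter.eventuallyEq_of_mem (?_ : ({(0 : EuclideanSpace ℝ (Fin n))}ᶜ : Set _) ∈ _) ?_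
    · rw [mem_ae_iff, compl_compl]
      exact h0
    · intro x hx
      exact mul_cancel_aux n g x hx
  exact ⟨fun x => if x = 0 then 0 else g x / ((‖x‖ ^ 2 : ℝ) : ℂ), memL2_aux n hn g,
    (schwartz_memL2 n g).ae_eq hae.symm, hae⟩
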